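/- Let G be a finite abelian group of odd exponent n, A = {1,...,n-1}, and let T = g_1 ⋯ g_r be an A-weighted zero-sum free sequence over G. Suppose h_1, h_2 are elements of G with b_1 h_1 = ∑_{i∈I_1} a_i g_i and b_2 h_2 = ∑_{i∈I_2} c_i g_i for weights b_1, b_2, a_i, c_i ∈ A and subsets I_1, I_2 ⊆ [1,r] with I_1 ∩ I_2 ≠ ∅. Then at least one of the two elements b_1 h_1 + b_2 h_2 and b_1 h_1 − b_2 h_2 is expressible as a nonempty A-weighted sum ∑_{i∈I} d_i g_i with ∅ ≠ I ⊆ I_1 ∪ I_2 and d_i ∈ A. -/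

import Mathlib

open Finset

/-- `I` is an index set carrying an `A`-weighted zero sum of `g` (the empty set counts). -/
def IsWZSum {G ι : Type*} [Fintype ι] [AddCommGroup G] (A : Set ℤ) (g : ι → G)
    (I : Finset ι) : Prop :=
  ∃ a : ι → ℤ, (∀ i ∈ I, a i ∈ A) ∧ ∑ i ∈ I, a i • g i = 0

/-- `N_{A,0}(S)`: the number of subsets of the index set carrying an `A`-weighted zero sum. -/
noncomputable def NZero {G ι : Type*} [Fintype ι] [AddCommGroup G] (A : Set ℤ) (g : ι → G) : ℕ :=
  Set.ncard {I : Finset ι | IsWZSum A g I}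

/-- The subsequence of `g` indexed by `J` is `A`-weighted zero-sum free. -/
def IsZSFree {G ι : Type*} [Fintype ι] [AddCommGroup G] (A : Set ℤ) (g : ι → G)
    (J : Finset ι) : Prop :=
  ∀ I ⊆ J, I.Nonempty → ¬ IsWZSum A g I

/-- The `A`-weighted Davenport constant of `G`. -/
noncomputable def DavenportW (A : Set ℤ) (G : Type*) [AddCommGroup G] : ℕ :=
  sInf {l : ℕ | 0 < l ∧ ∀ g : Fin l → G, ∃ I : Finset (Fin l), I.Nonempty ∧ IsWZSum A g I}


lemma key_combine {G : Type*} [AddCommGroup G] {r : ℕ} (g : Fin r → G) {N : ℤ}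
    (hNpos : 0 < N) (hsmul : ∀ x : G, N • x = 0)
    (I₁ I₂ : Finset (Fin r)) (a c : Fin r → ℤ) (i0 : Fin r)
    (hi01 : i0 ∈ I₁) (hi02 : i0 ∈ I₂) (hne : (a i0 + c i0) % N ≠ 0) :
    ∃ I ⊆ I₁ ∪ I₂, I.Nonempty ∧ ∃ d : Fin r → ℤ,
      (∀ i ∈ I, d i ∈ Set.Icc 1 (N - 1)) ∧
      ∑ i ∈ I₁, a i • g i + ∑ i ∈ I₂, c i • g i = ∑ i ∈ I, d i • g i := by
  have hmod : ∀ (m : ℤ) (x : G), (m % N) • x = m • x := by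
    intro m x
    conv_rhs => rw [← Int.mul_ediv_add_emod m N]
    rw [add_smul, mul_comm, mul_smul, hsmul, smul_zero, zero_add]
  set f : Fin r → ℤ := fun i => (if i ∈ I₁ then a i else 0) + (if i ∈ I₂ then c i else 0)
    with hf
  set d : Fin r → ℤ := fun i => f i % N with hd
  refine ⟨(I₁ ∪ I₂).filter (fun i => d i ≠ 0), Finset.filter_subset _ _, ⟨i0, ?_⟩, d, ?_, ?_⟩
  · simp only [Finset.mem_filter, Finset.mem_union]
    refine ⟨Or.inl hi01, ?_⟩
    simpa [hd, hf, hi01, hi02] using hne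
  · intro i hi
    simp only [Finset.mem_filter] at hi
    have h1 : 0 ≤ d i := Int.emod_nonneg _ (by omega)
    have h2 : d i < N := Int.emod_lt_of_pos _ hNpos
    have := hi.2
    constructor <;> omega
  · have step1 : ∑ i ∈ (I₁ ∪ I₂).filter (fun i => d i ≠ 0), d i • g i
        = ∑ i ∈ I₁ ∪ I₂, d i • g i := by
      refine Finset.sum_subset (Finset.filter_subset _ _) ?_
      intro i hi hni
      simp only [Finset.mem_filter, not_and, not_not] at hni
      rw [hni hi, zero_smul]
    have step2 : ∑ i ∈ I₁ ∪ I₂, d i • g i = ∑ i ∈ I₁ ∪ I₂, f i • g i :=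
      Finset.sum_congr rfl fun i _ => hmod _ _
    have step3 : ∑ i ∈ I₁ ∪ I₂, f i • g i
        = ∑ i ∈ I₁, a i • g i + ∑ i ∈ I₂, c i • g i := by
      have : ∀ i ∈ I₁ ∪ I₂, f i • g i
          = (if i ∈ I₁ then a i • g i else 0) + (if i ∈ I₂ then c i • g i else 0) := by
        intro i _
        by_cases h1 : i ∈ I₁ <;> by_cases h2 : i ∈ I₂ <;>
          simp [hf, h1, h2, add_smul]
      rw [Finset.sum_congr rfl this, Finset.sum_add_distrib,
        Finset.sum_ite_mem, Finset.sum_ite_mem,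
        Finset.union_inter_cancel_left, Finset.union_inter_cancel_right]
    rw [step1, step2, step3]

theorem stmt10 (G : Type*) [AddCommGroup G] [Finite G] (n : ℕ)
    (hn : AddMonoid.exponent G = n) (hodd : Odd n)
    (r : ℕ) (g : Fin r → G)
    (hzsf : IsZSFree (Set.Icc 1 ((n : ℤ) - 1)) g Finset.univ)
    (h₁ h₂ : G) (b₁ b₂ : ℤ)
    (hb₁ : b₁ ∈ Set.Icc 1 ((n : ℤ) - 1)) (hb₂ : b₂ ∈ Set.Icc 1 ((n : ℤ) - 1))
    (I₁ I₂ : Finset (Fin r)) (a c : Fin r → ℤ)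
    (ha : ∀ i ∈ I₁, a i ∈ Set.Icc 1 ((n : ℤ) - 1))
    (hc : ∀ i ∈ I₂, c i ∈ Set.Icc 1 ((n : ℤ) - 1))
    (e₁ : b₁ • h₁ = ∑ i ∈ I₁, a i • g i)
    (e₂ : b₂ • h₂ = ∑ i ∈ I₂, c i • g i)
    (hI : (I₁ ∩ I₂).Nonempty) :
    ∃ I ⊆ I₁ ∪ I₂, I.Nonempty ∧ ∃ d : Fin r → ℤ,
      (∀ i ∈ I, d i ∈ Set.Icc 1 ((n : ℤ) - 1)) ∧
      (b₁ • h₁ + b₂ • h₂ = ∑ i ∈ I, d i • g i ∨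
       b₁ • h₁ - b₂ • h₂ = ∑ i ∈ I, d i • g i) := by
  obtain ⟨i0, hi0⟩ := hI
  rw [Finset.mem_inter] at hi0
  have ha0 := ha i0 hi0.1
  have hc0 := hc i0 hi0.2
  simp only [Set.mem_Icc] at ha0 hc0 hb₁
  have hnpos : 0 < (n : ℤ) := by omega
  have hsmul : ∀ x : G, (n : ℤ) • x = 0 := by
    intro x
    have h := AddMonoid.exponent_nsmul_eq_zero (G := G) x
    rw [hn] at h
    simpa using h
  by_cases hkey : (a i0 + c i0) % (n : ℤ) ≠ 0
  · obtain ⟨I, hIsub, hIne, d, hdmem, hdsum⟩ :=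
      key_combine g hnpos hsmul I₁ I₂ a c i0 hi0.1 hi0.2 hkey
    exact ⟨I, hIsub, hIne, d, hdmem, Or.inl (by rw [e₁, e₂, hdsum])⟩
  · push_neg at hkey
    have hkey2 : (a i0 + (-c) i0) % (n : ℤ) ≠ 0 := by
      intro h0
      have d1 : (n : ℤ) ∣ (a i0 + c i0) := Int.dvd_of_emod_eq_zero hkey
      have d2 : (n : ℤ) ∣ (a i0 - c i0) := by
        simpa [sub_eq_add_neg] using Int.dvd_of_emod_eq_zero h0
      have d3 : (n : ℤ) ∣ 2 * a i0 := by
        have h := dvd_add d1 d2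
        have heq : a i0 + c i0 + (a i0 - c i0) = 2 * a i0 := by ring
        rwa [heq] at h
      obtain ⟨t, ht⟩ := d3
      obtain ⟨k, hk⟩ := hodd
      have hk' : (n : ℤ) = 2 * k + 1 := by exact_mod_cast hk
      have hpos : 0 < (n : ℤ) * t := by omega
      have hlt : (n : ℤ) * t < (n : ℤ) * 2 := by omega
      have ht2 : t < 2 := lt_of_mul_lt_mul_left hlt (le_of_lt hnpos)
      have ht1 : 0 < t := by
        rcases (mul_pos_iff.mp hpos) with ⟨_, h⟩ | ⟨h, _⟩
        · exact h
        · omega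
      have : t = 1 := by omega
      rw [this, mul_one] at ht
      omega
    obtain ⟨I, hIsub, hIne, d, hdmem, hdsum⟩ :=
      key_combine g hnpos hsmul I₁ I₂ a (-c) i0 hi0.1 hi0.2 hkey2
    refine ⟨I, hIsub, hIne, d, hdmem, Or.inr ?_⟩
    rw [e₁, e₂, ← hdsum, sub_eq_add_neg, ← Finset.sum_neg_distrib]
    congr 1
    exact Finset.sum_congr rfl fun i _ => by simp
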